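/- Lower bound on the directional derivative at the iterate: assume 0 < ε ≤ 1/2 and β > 0, and let π ∈ ℝⁿ satisfy φ_β(π) ≥ 4·ln(4m)/(ε·β). Then πᵀ∇φ_β(π) ≥ (1 − ε/4)·φ_β(π) ≥ (1 − ε/4)·q(R★Aᵀπ) ≥ 0. -/

import Mathlib

open Matrix BigOperators

/-- Asymmetric "norm" `p(v) = Σᵢ max(0, vᵢ)`. -/
noncomputable def pnorm {d : Type*} [Fintype d] (v : d → ℝ) : ℝ := ∑ i, max (v i) 0

/-- Asymmetric "norm" `q(v) = max(0, maxᵢ vᵢ)`. -/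
noncomputable def qnorm {d : Type*} [Fintype d] (v : d → ℝ) : ℝ :=
  Finset.univ.fold max 0 v

/-- ∞-norm `‖v‖_∞ = maxᵢ |vᵢ|` (as `max(0, maxᵢ |vᵢ|)`, which agrees with it). -/
noncomputable def infnorm {d : Type*} [Fintype d] (v : d → ℝ) : ℝ :=
  Finset.univ.fold max 0 (fun i => |v i|)

/-- 1-norm `‖v‖₁ = Σᵢ |vᵢ|`. -/
noncomputable def onenorm {d : Type*} [Fintype d] (v : d → ℝ) : ℝ := ∑ i, |v i|

/-- `W★ : ℝᵐ → ℝ²ᵐ`, sending `x` to `(W₊x, −W₋x)`. -/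
noncomputable def Wstar {m : ℕ} (wp wm : Fin m → ℝ) (x : Fin m → ℝ) : Fin m ⊕ Fin m → ℝ :=
  Sum.elim (fun e => wp e * x e) (fun e => -(wm e * x e))

/-- `R★ : ℝᵐ → ℝ²ᵐ`, sending `x` to `(W₊⁻¹x, −W₋⁻¹x)`. -/
noncomputable def Rstar {m : ℕ} (wp wm : Fin m → ℝ) (x : Fin m → ℝ) : Fin m ⊕ Fin m → ℝ :=
  Sum.elim (fun e => x e / wp e) (fun e => -(x e / wm e))

/-- The transpose `R★ᵀ : ℝ²ᵐ → ℝᵐ`. -/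
noncomputable def RstarT {m : ℕ} (wp wm : Fin m → ℝ) (g : Fin m ⊕ Fin m → ℝ) : Fin m → ℝ :=
  fun e => g (Sum.inl e) / wp e - g (Sum.inr e) / wm e

/-- Soft-max `lse_β(v) = (1/β)·ln(Σᵢ e^{β·vᵢ})`. -/
noncomputable def lse {d : Type*} [Fintype d] (β : ℝ) (v : d → ℝ) : ℝ :=
  (1 / β) * Real.log (∑ i, Real.exp (β * v i))

/-- Gradient of the soft-max: `∇lse_β(v)ᵢ = e^{β·vᵢ}/Σⱼ e^{β·vⱼ}`. -/
noncomputable def gradLse {d : Type*} [Fintype d] (β : ℝ) (v : d → ℝ) : d → ℝ :=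
  fun i => Real.exp (β * v i) / ∑ j, Real.exp (β * v j)

/-- Potential `φ_β(π) = lse_β(R★Aᵀπ)`. -/
noncomputable def pot {n m : ℕ} (A : Matrix (Fin n) (Fin m) ℝ) (wp wm : Fin m → ℝ)
    (β : ℝ) (π : Fin n → ℝ) : ℝ :=
  lse β (Rstar wp wm (Aᵀ *ᵥ π))

/-- Gradient of the potential: `∇φ_β(π) = A·R★ᵀ·∇lse_β(R★Aᵀπ)`. -/
noncomputable def gradPot {n m : ℕ} (A : Matrix (Fin n) (Fin m) ℝ) (wp wm : Fin m → ℝ)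
    (β : ℝ) (π : Fin n → ℝ) : Fin n → ℝ :=
  A *ᵥ RstarT wp wm (gradLse β (Rstar wp wm (Aᵀ *ᵥ π)))

lemma aux_log_ge_one_sub_inv {x : ℝ} (hx : 0 < x) : 1 - x⁻¹ ≤ Real.log x := by
  have h := Real.log_le_sub_one_of_pos (inv_pos.mpr hx)
  rw [Real.log_inv] at h
  linarith

lemma aux_softmax_entropy {ι : Type*} [Fintype ι] [Nonempty ι] (t : ι → ℝ) :
    Real.log (∑ j, Real.exp (t j)) - Real.log (Fintype.card ι) ≤
      ∑ i, (Real.exp (t i) / ∑ j, Real.exp (t j)) * t i := by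
  set S := ∑ j, Real.exp (t j) with hSdef
  have hSpos : 0 < S := Finset.sum_pos (fun i _ => Real.exp_pos _) Finset.univ_nonempty
  set d : ℝ := (Fintype.card ι : ℝ) with hddef
  have hd : 0 < d := by
    have h := Fintype.card_pos (α := ι)
    rw [hddef]
    exact_mod_cast h
  have key : ∀ i : ι, Real.exp (t i) / S - 1 / d ≤
      (Real.exp (t i) / S) * (t i - Real.log S + Real.log d) := by
    intro i
    have hg : 0 < Real.exp (t i) / S := by positivity
    have h1 : t i - Real.log S + Real.log d = Real.log (d * (Real.exp (t i) / S)) := by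
      rw [Real.log_mul (ne_of_gt hd) (ne_of_gt hg),
        Real.log_div (Real.exp_ne_zero _) (ne_of_gt hSpos), Real.log_exp]
      ring
    rw [h1]
    have h2 : 1 - (d * (Real.exp (t i) / S))⁻¹ ≤ Real.log (d * (Real.exp (t i) / S)) :=
      aux_log_ge_one_sub_inv (by positivity)
    have h3 : (Real.exp (t i) / S) * (1 - (d * (Real.exp (t i) / S))⁻¹)
        = Real.exp (t i) / S - 1 / d := by
      field_simp
    nlinarith [hg, h2]
  have hsum := Finset.sum_le_sum (s := Finset.univ) (fun i (_ : i ∈ Finset.univ) => key i)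
  have hg1 : ∑ i, Real.exp (t i) / S = 1 := by
    rw [← Finset.sum_div, ← hSdef, div_self (ne_of_gt hSpos)]
  have hlhs : ∑ i : ι, (Real.exp (t i) / S - 1 / d) = 0 := by
    rw [Finset.sum_sub_distrib, hg1, Finset.sum_const, Finset.card_univ, nsmul_eq_mul]
    have hcd : ((Fintype.card ι : ℝ)) = d := hddef.symm
    rw [hcd]
    field_simp
    norm_num
  have hrhs : ∑ i : ι, (Real.exp (t i) / S) * (t i - Real.log S + Real.log d)
      = (∑ i, (Real.exp (t i) / S) * t i) + (Real.log d - Real.log S) := by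
    have : ∀ i : ι, (Real.exp (t i) / S) * (t i - Real.log S + Real.log d)
        = (Real.exp (t i) / S) * t i + (Real.log d - Real.log S) * (Real.exp (t i) / S) := by
      intro i; ring
    rw [Finset.sum_congr rfl (fun i _ => this i), Finset.sum_add_distrib,
      ← Finset.mul_sum, hg1, mul_one]
  rw [hlhs, hrhs] at hsum
  linarith

/-- Lower bound on the directional derivative at the iterate:
`πᵀ∇φ_β(π) ≥ (1 − ε/4)·φ_β(π) ≥ (1 − ε/4)·q(R★Aᵀπ) ≥ 0`. -/
theorem directional_derivative_lower_bound {n m : ℕ} (hn : 1 ≤ n) (hm : 1 ≤ m)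
    (A : Matrix (Fin n) (Fin m) ℝ) (wp wm : Fin m → ℝ)
    (hw : ∀ e, 0 < wm e ∧ wm e ≤ wp e)
    (ε β : ℝ) (hε : 0 < ε) (hε' : ε ≤ 1 / 2) (hβ : 0 < β)
    (π : Fin n → ℝ)
    (hpot : 4 * Real.log (4 * (m : ℝ)) / (ε * β) ≤ pot A wp wm β π) :
    (1 - ε / 4) * pot A wp wm β π ≤ π ⬝ᵥ gradPot A wp wm β π ∧
    (1 - ε / 4) * qnorm (Rstar wp wm (Aᵀ *ᵥ π)) ≤ (1 - ε / 4) * pot A wp wm β π ∧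
    0 ≤ (1 - ε / 4) * qnorm (Rstar wp wm (Aᵀ *ᵥ π)) := by
  have hεc : (0:ℝ) ≤ 1 - ε / 4 := by linarith
  haveI : Nonempty (Fin m ⊕ Fin m) := ⟨Sum.inl ⟨0, hm⟩⟩
  set x : Fin m → ℝ := Aᵀ *ᵥ π with hxdef
  set v : Fin m ⊕ Fin m → ℝ := Rstar wp wm x with hvdef
  set S : ℝ := ∑ j, Real.exp (β * v j) with hSdef
  have hSpos : 0 < S := Finset.sum_pos (fun i _ => Real.exp_pos _) Finset.univ_nonempty
  have hwp : ∀ e, 0 < wp e := fun e => lt_of_lt_of_le (hw e).1 (hw e).2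
  have hpotdef : pot A wp wm β π = (1 / β) * Real.log S := rfl
  -- each coordinate of v is at most pot
  have hvle : ∀ i, v i ≤ pot A wp wm β π := by
    intro i
    have h1 : Real.exp (β * v i) ≤ S := by
      rw [hSdef]
      exact Finset.single_le_sum (f := fun j => Real.exp (β * v j))
        (fun j _ => (Real.exp_pos _).le) (Finset.mem_univ i)
    have h2 : β * v i ≤ Real.log S := by
      rw [← Real.log_exp (β * v i)]
      exact Real.log_le_log (Real.exp_pos _) h1
    rw [hpotdef]
    rw [div_mul_eq_mul_div, one_mul, le_div_iff₀ hβ]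
    linarith [h2]
  -- pot is nonnegative
  have hpot0 : 0 ≤ pot A wp wm β π := by
    set e0 : Fin m := ⟨0, hm⟩
    rcases le_or_gt 0 (x e0) with h | h
    · have : (0:ℝ) ≤ v (Sum.inl e0) := by
        simp only [hvdef, Rstar, Sum.elim_inl]
        exact div_nonneg h (hwp e0).le
      linarith [hvle (Sum.inl e0)]
    · have : (0:ℝ) ≤ v (Sum.inr e0) := by
        simp only [hvdef, Rstar, Sum.elim_inr]
        rw [← neg_div]
        exact div_nonneg (by linarith) (hw e0).1.le
      linarith [hvle (Sum.inr e0)]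
  -- qnorm bound
  have hq0 : 0 ≤ qnorm v := by
    rw [qnorm]
    exact (Finset.le_fold_max 0).mpr (Or.inl le_rfl)
  have hqle : qnorm v ≤ pot A wp wm β π := by
    rw [qnorm]
    exact (Finset.fold_max_le _).mpr ⟨hpot0, fun i _ => hvle i⟩
  refine ⟨?_, mul_le_mul_of_nonneg_left hqle hεc, mul_nonneg hεc hq0⟩
  -- main inequality
  have hdot : π ⬝ᵥ gradPot A wp wm β π = ∑ i, gradLse β v i * v i := by
    rw [gradPot, Matrix.dotProduct_mulVec, ← Matrix.mulVec_transpose, ← hxdef, ← hvdef]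
    have : ∀ e : Fin m, x e * RstarT wp wm (gradLse β v) e
        = gradLse β v (Sum.inl e) * v (Sum.inl e) + gradLse β v (Sum.inr e) * v (Sum.inr e) := by
      intro e
      simp only [RstarT, hvdef, Rstar, Sum.elim_inl, Sum.elim_inr]
      ring
    rw [dotProduct]
    rw [Finset.sum_congr rfl (fun e _ => this e), Finset.sum_add_distrib,
      Fintype.sum_sum_type]
  have hcard : (Fintype.card (Fin m ⊕ Fin m) : ℝ) = 2 * m := by
    simp [Fintype.card_sum]
    ring
  have hsm := aux_softmax_entropy (fun i => β * v i)
  rw [hcard] at hsm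
  have hsum_eq : ∑ i, (Real.exp (β * v i) / ∑ j, Real.exp (β * v j)) * (β * v i)
      = β * ∑ i, gradLse β v i * v i := by
    rw [Finset.mul_sum]
    refine Finset.sum_congr rfl (fun i _ => ?_)
    simp only [gradLse, ← hSdef]
    ring
  rw [hsum_eq, ← hSdef] at hsm
  -- hsm : log S - log (2m) ≤ β * Σ g v
  have hm2 : (0:ℝ) < 2 * m := by
    have : (1:ℝ) ≤ (m:ℝ) := by exact_mod_cast hm
    linarith
  have hlog24 : Real.log (2 * (m:ℝ)) ≤ Real.log (4 * (m:ℝ)) :=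
    Real.log_le_log hm2 (by linarith)
  -- from hpot : 4 log(4m)/(εβ) ≤ pot
  have hεβ : 0 < ε * β := mul_pos hε hβ
  have h4 : 4 * Real.log (4 * (m:ℝ)) ≤ pot A wp wm β π * (ε * β) := by
    rw [div_le_iff₀ hεβ] at hpot
    exact hpot
  -- goal : (1 - ε/4) * pot ≤ Σ g v
  rw [hdot]
  have hlogS : Real.log S = β * pot A wp wm β π := by
    rw [hpotdef]
    field_simp
  rw [hlogS] at hsm
  -- β*pot - log(2m) ≤ β * Σ g v, and log(2m) ≤ log(4m) ≤ ε β pot /4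
  nlinarith [hsm, hlog24, h4, hβ]
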